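/- For every $\theta \in (-\pi, \pi]$, one has $|\sinh(e^{i\theta/2})| \ge \sin 1$, with equality when $\theta = \pi$ (i.e., at the point $e^{i\pi/2} = i$, where $|\sinh(i)| = \sin 1$). -/

import Mathlib

open Real Set

lemma sin1_lin {t : ℝ} (h0 : 0 ≤ t) (h1 : t ≤ 1) : t * Real.sin 1 ≤ Real.sin t := by
  have hc := strictConcaveOn_sin_Icc.concaveOn.2
    (x := 0) (y := 1) ⟨le_rfl, Real.pi_pos.le⟩ ⟨zero_le_one, by linarith [Real.pi_gt_three]⟩
    (show (0:ℝ) ≤ 1 - t by linarith) h0 (by ring)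
  simpa [Real.sin_zero, smul_eq_mul] using hc

lemma sinh_norm_sq (x y : ℝ) :
    ‖Complex.sinh (x + y * Complex.I)‖ ^ 2 = Real.sinh x ^ 2 + Real.sin y ^ 2 := by
  have h : Complex.sinh (x + y * Complex.I)
      = (Real.sinh x * Real.cos y : ℝ) + (Real.cosh x * Real.sin y : ℝ) * Complex.I := by
    rw [Complex.sinh_add, Complex.sinh_mul_I, Complex.cosh_mul_I]
    push_cast [Complex.ofReal_sinh, Complex.ofReal_cosh, Complex.ofReal_sin, Complex.ofReal_cos]
    ring
  rw [h, Complex.sq_norm]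
  rw [Complex.normSq_add_mul_I]
  nlinarith [Real.sin_sq_add_cos_sq y, Real.cosh_sq x]

theorem sinh_boundary_bound :
    (∀ θ ∈ Ioc (-π) π, Real.sin 1 ≤ ‖Complex.sinh (Complex.exp ((θ / 2 : ℂ) * Complex.I))‖) ∧
      ‖Complex.sinh Complex.I‖ = Real.sin 1 := by
  have hs1 : 0 ≤ Real.sin 1 := Real.sin_nonneg_of_nonneg_of_le_pi zero_le_one
    (by linarith [Real.pi_gt_three])
  constructor
  · intro θ hθ
    set c := Real.cos (θ / 2)
    set s := Real.sin (θ / 2)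
    have hexp : Complex.exp ((θ / 2 : ℂ) * Complex.I) = (c : ℂ) + (s : ℂ) * Complex.I := by
      rw [show ((θ : ℂ) / 2) = ((θ / 2 : ℝ) : ℂ) by push_cast; ring,
        Complex.exp_mul_I, ← Complex.ofReal_cos, ← Complex.ofReal_sin]
    have hc0 : 0 ≤ c := Real.cos_nonneg_of_mem_Icc
      ⟨by linarith [hθ.1], by linarith [hθ.2]⟩
    have hc1 : c ≤ 1 := Real.cos_le_one _
    have hs1' : |s| ≤ 1 := Real.abs_sin_le_one _
    have hpyth : c ^ 2 + s ^ 2 = 1 := by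
      have := Real.sin_sq_add_cos_sq (θ / 2); linarith
    have hn := sinh_norm_sq c s
    rw [hexp]
    have h1 : c * Real.sin 1 ≤ Real.sinh c := by
      calc c * Real.sin 1 ≤ c * 1 := by nlinarith [Real.sin_le_one 1]
        _ = c := mul_one c
        _ ≤ Real.sinh c := Real.self_le_sinh_iff.2 hc0
    have h2 : |s| * Real.sin 1 ≤ Real.sin |s| := sin1_lin (abs_nonneg s) hs1'
    have h3 : Real.sin |s| ^ 2 = Real.sin s ^ 2 := by
      rcases abs_cases s with ⟨h, _⟩ | ⟨h, _⟩ <;> rw [h] <;> simp [Real.sin_neg]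
    have hsq : Real.sin 1 ^ 2 ≤ ‖Complex.sinh ((c : ℂ) + (s : ℂ) * Complex.I)‖ ^ 2 := by
      rw [hn, ← h3]
      have hsh : 0 ≤ Real.sinh c := le_trans (mul_nonneg hc0 hs1) h1
      nlinarith [sq_abs s, abs_nonneg s, mul_nonneg hc0 hs1,
        mul_nonneg (abs_nonneg s) hs1]
    exact (pow_le_pow_iff_left₀ hs1 (norm_nonneg _) two_ne_zero).1 hsq
  · have : Complex.sinh Complex.I = Real.sin 1 * Complex.I := by
      have := Complex.sinh_mul_I (x := 1)
      simpa using this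
    rw [this, norm_mul, Complex.norm_I, mul_one, Complex.norm_real,
      Real.norm_eq_abs, abs_of_nonneg hs1]
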